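/- If m ≤ an and f : X → X is an (m,n)-expansive homeomorphism of a compact metric space, then f is (a,1)-expansive. In particular, if m ≤ 2n then (m,n)-expansiveness implies expansiveness. -/

import Mathlib

variable {X : Type*} [MetricSpace X]

/-- The `k`-th iterate (`k ∈ ℤ`) of a homeomorphism, as a function. -/
noncomputable def hiter (f : X ≃ₜ X) (k : ℤ) : X → X := ⇑(f.toEquiv ^ k)

/-- A set is `δ`-separated if distinct points are at distance `> δ`. -/
def IsSeparated' (δ : ℝ) (B : Set X) : Prop :=
  ∀ x ∈ B, ∀ y ∈ B, x ≠ y → δ < dist x y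

/-- The `δ`-cardinality of a set: sup of cardinalities of `δ`-separated subsets. -/
noncomputable def dCard (δ : ℝ) (A : Set X) : ℕ∞ :=
  ⨆ B ∈ {B : Set X | B ⊆ A ∧ IsSeparated' δ B}, B.encard

/-- `(m,n)`-expansiveness with a given expansive constant `δ`. -/
def MNExpansiveWith (f : X ≃ₜ X) (m n : ℕ) (δ : ℝ) : Prop :=
  ∀ A : Set X, A.encard = m → ∃ k : ℤ, (n : ℕ∞) < dCard δ (hiter f k '' A)

/-- `(m,n)`-expansiveness. -/
def MNExpansive (f : X ≃ₜ X) (m n : ℕ) : Prop :=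
  ∃ δ > 0, MNExpansiveWith f m n δ

section Aux

lemma hiter_add (f : X ≃ₜ X) (j k : ℤ) (x : X) :
    hiter f (j + k) x = hiter f j (hiter f k x) := by
  simp only [hiter, zpow_add, Equiv.Perm.mul_apply]

lemma hiter_zero (f : X ≃ₜ X) (x : X) : hiter f 0 x = x := by simp [hiter]

lemma hiter_inj (f : X ≃ₜ X) (k : ℤ) : Function.Injective (hiter f k) :=
  (f.toEquiv ^ k).injective

lemma hiter_cancel (f : X ≃ₜ X) (k : ℤ) (x : X) :
    hiter f (-k) (hiter f k x) = x := by
  rw [← hiter_add, neg_add_cancel, hiter_zero]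

/-- A fixed point of `f^T` is fixed by all multiples of `T`. -/
lemma hiter_mul_fix (f : X ≃ₜ X) {T : ℤ} {s : X} (hs : hiter f T s = s) (q : ℤ) :
    hiter f (T * q) s = s := by
  have key : ∀ q : ℤ, ((f.toEquiv ^ T) ^ q) s = s := by
    intro q
    induction q using Int.induction_on with
    | zero => simp
    | succ i ih =>
        rw [zpow_add, Equiv.Perm.mul_apply]
        simp only [zpow_one]
        rw [show (f.toEquiv ^ T) s = s from hs, ih]
    | pred i ih =>
        have hs' : (f.toEquiv ^ T) s = s := hs
        have hinv : ((f.toEquiv ^ T)⁻¹) s = s := by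
          have := congrArg (⇑(f.toEquiv ^ T)⁻¹) hs'
          simpa using this.symm
        rw [sub_eq_add_neg, zpow_add, Equiv.Perm.mul_apply,
          show ((f.toEquiv ^ T) ^ (-1 : ℤ)) s = ((f.toEquiv ^ T)⁻¹) s by simp,
          hinv, ih]
  have : hiter f (T * q) s = ((f.toEquiv ^ T) ^ q) s := by
    simp [hiter, zpow_mul]
  rw [this, key q]

lemma hiter_emod (f : X ≃ₜ X) {T : ℤ} {s : X} (hs : hiter f T s = s)
    (j : ℤ) : hiter f j s = hiter f (j % T) s := by
  conv_lhs => rw [← Int.mul_ediv_add_emod j T]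
  rw [add_comm, hiter_add, hiter_mul_fix f hs (j / T)]

/-- upper bound on `dCard` via a finite cover by `δ`-small sets. -/
lemma dCard_le_of_cover {δ : ℝ} {A : Set X} (S : Finset (Set X))
    (hcov : A ⊆ ⋃ C ∈ S, C)
    (hsmall : ∀ C ∈ S, ∀ x ∈ C, ∀ y ∈ C, dist x y ≤ δ) :
    dCard δ A ≤ (S.card : ℕ∞) := by
  apply iSup₂_le
  rintro B ⟨hBA, hBsep⟩
  classical
  have hchoice : ∀ b ∈ B, ∃ C ∈ S, b ∈ C := by
    intro b hb
    have := hcov (hBA hb)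
    simpa using this
  choose g hg1 hg2 using hchoice
  let g' : X → Set X := fun x => if h : x ∈ B then g x h else ∅
  have hinj : Set.InjOn g' B := by
    intro x hx y hy hxy
    by_contra hne
    have hd : δ < dist x y := hBsep x hx y hy hne
    have hx' : x ∈ g x hx := hg2 x hx
    have hy' : y ∈ g y hy := hg2 y hy
    have : g x hx = g y hy := by simpa [g', hx, hy] using hxy
    have : dist x y ≤ δ := hsmall _ (hg1 x hx) x hx' y (this ▸ hy')
    linarith
  calc B.encard = (g' '' B).encard := (hinj.encard_image).symm
    _ ≤ (S : Set (Set X)).encard := by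
        apply Set.encard_mono
        rintro _ ⟨b, hb, rfl⟩
        simpa [g', hb] using hg1 b hb
    _ = (S.card : ℕ∞) := Set.encard_coe_eq_coe_finsetCard S

/-- from `dCard ≤ 1` conclude all pairwise distances are `≤ δ`. -/
lemma pair_close_of_dCard_le_one {δ : ℝ} (hδ : 0 < δ) {A : Set X}
    (h : dCard δ A ≤ 1) {x y : X} (hx : x ∈ A) (hy : y ∈ A) : dist x y ≤ δ := by
  by_contra hlt
  push_neg at hlt
  have hne : x ≠ y := by
    intro h'; subst h'; simp at hlt; linarith
  have hsep : IsSeparated' δ {x, y} := by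
    intro u hu v hv huv
    rcases hu with rfl | hu <;> rcases hv with rfl | hv
    · exact absurd rfl huv
    · rcases hv with rfl; exact hlt
    · rcases hu with rfl; rwa [dist_comm]
    · rcases hu with rfl; rcases hv with rfl; exact absurd rfl huv
  have hsub : ({x, y} : Set X) ⊆ A := by
    rintro u (rfl | hu); exact hx; rcases hu with rfl; exact hy
  have hle : ({x, y} : Set X).encard ≤ dCard δ A := by
    exact le_iSup₂_of_le ({x, y} : Set X)
      (show ({x,y}:Set X) ∈ {B : Set X | B ⊆ A ∧ IsSeparated' δ B} from ⟨hsub, hsep⟩) le_rfl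
  rw [Set.encard_pair hne] at hle
  have : (2 : ℕ∞) ≤ 1 := hle.trans h
  norm_num at this

/-- the set of periodic points whose orbit passes through `s` is finite. -/
lemma periodic_fiber_finite (f : X ≃ₜ X) (s : X) :
    {y : X | (∃ j : ℤ, hiter f j y = s) ∧ ∃ t : ℤ, t ≠ 0 ∧ hiter f t y = y}.Finite := by
  by_cases hne : {y : X | (∃ j : ℤ, hiter f j y = s) ∧
      ∃ t : ℤ, t ≠ 0 ∧ hiter f t y = y}.Nonempty
  · obtain ⟨y0, ⟨j0, hj0⟩, t0, ht0, hper⟩ := hne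
    set T : ℤ := (t0.natAbs : ℤ) with hTdef
    have hT : 0 < T := by
      simp only [hTdef]
      exact_mod_cast Nat.pos_of_ne_zero (Int.natAbs_ne_zero.mpr ht0)
    have hy0T : hiter f T y0 = y0 := by
      rcases Int.natAbs_eq t0 with h | h
    -- t0 = T or t0 = -T
      · rw [hTdef, ← h]; exact hper
      · have : hiter f (-t0) (hiter f t0 y0) = y0 := hiter_cancel f t0 y0
        rw [hper] at this
        rw [hTdef, show (t0.natAbs : ℤ) = -t0 by omega]
        exact this
    have hsT : hiter f T s = s := by
      rw [← hj0, ← hiter_add, add_comm, hiter_add, hy0T]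
    apply Set.Finite.subset (((Set.finite_Iio t0.natAbs).image
      (fun r : ℕ => hiter f (r : ℤ) s)))
    rintro y ⟨⟨j, hj⟩, -⟩
    have hy : y = hiter f (-j) s := by
      rw [← hj, hiter_cancel]
    have hmod := hiter_emod f hsT (-j)
    have hnonneg : 0 ≤ (-j) % T := Int.emod_nonneg _ (by omega)
    have hltT : (-j) % T < T := Int.emod_lt_of_pos _ hT
    refine ⟨((-j) % T).toNat, ?_, ?_⟩
    · simp only [Set.mem_Iio]
      omega
    · show hiter f (((-j) % T).toNat : ℤ) s = y
      rw [Int.toNat_of_nonneg hnonneg, ← hmod, ← hy]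
  · rw [Set.not_nonempty_iff_eq_empty] at hne
    rw [hne]; exact Set.finite_empty

/-- disjoint union of `c` sets of cardinality `a` has cardinality `c*a`. -/
lemma encard_biUnion_const {α : Type*} (a : ℕ) (S : Finset (Set α))
    (hdisj : (S : Set (Set α)).PairwiseDisjoint id)
    (hcard : ∀ C ∈ S, C.encard = (a : ℕ∞)) :
    (⋃ C ∈ S, C).encard = ((S.card * a : ℕ) : ℕ∞) := by
  classical
  induction S using Finset.induction_on with
  | empty => simp
  | @insert C S hCS ih =>
      have hdisj' : (S : Set (Set α)).PairwiseDisjoint id := by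
        apply hdisj.subset; simp [Set.subset_insert]
      have hC : Disjoint C (⋃ D ∈ S, D) := by
        rw [Set.disjoint_iUnion_right]
        intro D
        rw [Set.disjoint_iUnion_right]
        intro hD
        have hne : C ≠ D := by rintro rfl; exact hCS hD
        exact hdisj (by simp) (by simp [hD]) hne
      rw [Finset.set_biUnion_insert, Set.encard_union_eq hC,
        hcard C (by simp), ih hdisj' (fun D hD => hcard D (by simp [hD])),
        Finset.card_insert_of_notMem hCS]
      push_cast
      ring
end Aux

lemma key_expansive (f : X ≃ₜ X) (a m n : ℕ) (h2 : 1 ≤ n) (ha : 2 ≤ a)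
    (hm : m ≤ a * n) (hf : MNExpansive f m n) : MNExpansive f a 1 := by
  classical
  by_contra hcon
  rw [MNExpansive] at hcon
  push_neg at hcon
  obtain ⟨e, he, hfe⟩ := hf
  -- clusters at every scale
  have hclus : ∀ δ : ℝ, 0 < δ → ∃ A : Set X, A.encard = (a : ℕ∞) ∧
      ∀ (k : ℤ), ∀ x ∈ A, ∀ y ∈ A, dist (hiter f k x) (hiter f k y) ≤ δ := by
    intro δ hδ
    have h1 := hcon δ hδ
    rw [MNExpansiveWith] at h1
    push_neg at h1
    obtain ⟨A, hA, hk⟩ := h1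
    refine ⟨A, hA, fun k x hx y hy => ?_⟩
    have hle : dCard δ (hiter f k '' A) ≤ 1 := by
      have := hk k
      simpa using this
    exact pair_close_of_dCard_le_one hδ hle ⟨x, hx, rfl⟩ ⟨y, hy, rfl⟩
  -- cluster predicate at scale e
  set Clu : Set X → Prop := fun C => C.encard = (a : ℕ∞) ∧
    ∀ (k : ℤ), ∀ x ∈ C, ∀ y ∈ C, dist (hiter f k x) (hiter f k y) ≤ e with hCludef
  have hCluImage : ∀ C, Clu C → ∀ t : ℤ, Clu (hiter f t '' C) := by
    rintro C ⟨hC1, hC2⟩ t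
    constructor
    · rw [(hiter_inj f t).injOn.encard_image]
      exact hC1
    · rintro k _ ⟨x, hx, rfl⟩ _ ⟨y, hy, rfl⟩
      rw [← hiter_add, ← hiter_add]
      exact hC2 (k + t) x hx y hy
  have hCluNonempty : ∀ C, Clu C → C.Nonempty := by
    intro C hC
    rw [← Set.encard_ne_zero, hC.1]
    have : a ≠ 0 := by omega
    exact_mod_cast this
  have hCluFin : ∀ C, Clu C → C.Finite := fun C hC =>
    Set.finite_of_encard_eq_coe hC.1
  have hCluClose : ∀ C, Clu C → ∀ x ∈ C, ∀ y ∈ C, dist x y ≤ e := by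
    intro C hC x hx y hy
    have := hC.2 0 x hx y hy
    rwa [hiter_zero, hiter_zero] at this
  -- families of pairwise disjoint clusters
  set M : Set ℕ := {c : ℕ | ∃ S : Finset (Set X), S.card = c ∧ (∀ C ∈ S, Clu C) ∧
    (S : Set (Set X)).PairwiseDisjoint id} with hMdef
  have h0M : (0 : ℕ) ∈ M := ⟨∅, by simp, by simp, by simp⟩
  -- there is no family of n pairwise disjoint clusters
  have hnM : n ∉ M := by
    rintro ⟨S, hScard, hSClu, hSdisj⟩
    have hUcard : (⋃ C ∈ S, C).encard = ((S.card * a : ℕ) : ℕ∞) :=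
      encard_biUnion_const a S hSdisj (fun C hC => (hSClu C hC).1)
    have hmle : (m : ℕ∞) ≤ (⋃ C ∈ S, C).encard := by
      rw [hUcard, hScard]
      have : m ≤ n * a := by rwa [Nat.mul_comm n a]
      exact_mod_cast this
    obtain ⟨B, hBU, hBcard⟩ := Set.exists_subset_encard_eq hmle
    obtain ⟨k, hk⟩ := hfe B hBcard
    refine absurd hk (not_lt.mpr ?_)
    have hcov : hiter f k '' B ⊆ ⋃ C ∈ S.image (Set.image (hiter f k)), C := by
      rintro _ ⟨b, hb, rfl⟩
      obtain ⟨C, hCS, hbC⟩ : ∃ C ∈ S, b ∈ C := by simpa using hBU hb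
      exact Set.mem_biUnion (Finset.mem_image_of_mem _ hCS) ⟨b, hbC, rfl⟩
    have hsmall : ∀ C ∈ S.image (Set.image (hiter f k)),
        ∀ x ∈ C, ∀ y ∈ C, dist x y ≤ e := by
      intro C hC
      obtain ⟨D, hDS, rfl⟩ := Finset.mem_image.mp hC
      exact hCluClose _ (hCluImage D (hSClu D hDS) k)
    calc dCard e (hiter f k '' B) ≤ ((S.image (Set.image (hiter f k))).card : ℕ∞) :=
          dCard_le_of_cover _ hcov hsmall
      _ ≤ (n : ℕ∞) := by
          have := Finset.card_image_le (s := S) (f := Set.image (hiter f k))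
          rw [hScard] at this
          exact_mod_cast this
  have hMbdd : BddAbove M := by
    refine ⟨n, fun c hc => ?_⟩
    by_contra hlt
    push_neg at hlt
    obtain ⟨S, hScard, hSClu, hSdisj⟩ := hc
    obtain ⟨T, hTS, hTcard⟩ := Finset.exists_subset_card_eq
      (show n ≤ S.card by omega)
    exact hnM ⟨T, hTcard, fun C hC => hSClu C (hTS hC),
      hSdisj.subset (by exact_mod_cast hTS)⟩
  -- maximal family
  obtain ⟨S, hScard, hSClu, hSdisj⟩ := Nat.sSup_mem ⟨0, h0M⟩ hMbdd
  set Sfull : Set X := ⋃ C ∈ S, C with hSfulldef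
  have hSfin : Sfull.Finite :=
    Set.Finite.biUnion S.finite_toSet (fun C hC => hCluFin C (hSClu C hC))
  -- every cluster meets the maximal family's union
  have hmeet : ∀ C, Clu C → (C ∩ Sfull).Nonempty := by
    intro C hC
    by_contra hem
    rw [Set.not_nonempty_iff_eq_empty] at hem
    have hCnotin : C ∉ S := by
      intro hin
      obtain ⟨x, hx⟩ := hCluNonempty C hC
      have : x ∈ C ∩ Sfull := ⟨hx, Set.mem_biUnion hin hx⟩
      rw [hem] at this
      exact this
    have hnew : (sSup M + 1) ∈ M := by
      refine ⟨insert C S, ?_, ?_, ?_⟩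
      · rw [Finset.card_insert_of_notMem hCnotin, hScard]
      · intro D hD
        rcases Finset.mem_insert.mp hD with rfl | hD
        · exact hC
        · exact hSClu D hD
      · rw [Finset.coe_insert]
        refine hSdisj.insert (fun D hD hne => ?_)
        rw [Set.disjoint_left]
        intro x hxC hxD
        have : x ∈ C ∩ Sfull := ⟨hxC, Set.mem_biUnion hD hxD⟩
        rw [hem] at this
        exact this
    have := le_csSup hMbdd hnew
    omega
  -- the periodic kernel
  set P : Set X := {y : X | (∃ s ∈ Sfull, ∃ j : ℤ, hiter f j y = s) ∧
    ∃ t : ℤ, t ≠ 0 ∧ hiter f t y = y} with hPdef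
  have hPfin : P.Finite := by
    apply Set.Finite.subset (Set.Finite.biUnion hSfin
      (fun s _ => periodic_fiber_finite f s))
    rintro y ⟨⟨s, hs, j, hj⟩, t, ht, hper⟩
    exact Set.mem_biUnion hs ⟨⟨j, hj⟩, t, ht, hper⟩
  -- the sequence of clusters at scales min e (1/(i+1))
  have hdpos : ∀ i : ℕ, (0:ℝ) < min e (1 / (i + 1)) := by
    intro i
    apply lt_min he
    positivity
  choose Aseq hAcard hAclose using fun i : ℕ => hclus (min e (1 / (i + 1))) (hdpos i)
  have hAClu : ∀ i, Clu (Aseq i) := by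
    intro i
    exact ⟨hAcard i, fun k x hx y hy =>
      (hAclose i k x hx y hy).trans (min_le_left _ _)⟩
  -- each cluster in the sequence contains a point of P
  have hanch : ∀ i : ℕ, ∃ x, x ∈ P ∧ x ∈ Aseq i := by
    intro i
    have htrans : ∀ k : ℤ, ∃ x, x ∈ Aseq i ∧ hiter f k x ∈ Sfull := by
      intro k
      obtain ⟨z, hz1, hz2⟩ := hmeet _ (hCluImage _ (hAClu i) k)
      obtain ⟨x, hx, rfl⟩ := hz1
      exact ⟨x, hx, hz2⟩
    choose g hg1 hg2 using htrans
    haveI : Finite ↥((Aseq i) ×ˢ Sfull) :=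
      ((hCluFin _ (hAClu i)).prod hSfin).to_subtype
    obtain ⟨k, k', hkk', heq⟩ := Finite.exists_ne_map_eq_of_infinite
      (fun k : ℤ => (⟨(g k, hiter f k (g k)),
        Set.mk_mem_prod (hg1 k) (hg2 k)⟩ : ↥((Aseq i) ×ˢ Sfull)))
    have hpair := Subtype.ext_iff.mp heq
    have hgx : g k = g k' := (Prod.ext_iff.mp hpair).1
    have hit : hiter f k (g k) = hiter f k' (g k) := by
      have h2' := (Prod.ext_iff.mp hpair).2
      simpa [← hgx] using h2'
    refine ⟨g k, ⟨⟨hiter f k (g k), hg2 k, k, rfl⟩,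
      k - k', sub_ne_zero.mpr hkk', ?_⟩, hg1 k⟩
    have hc := congrArg (hiter f (-k')) hit
    rw [hiter_cancel, ← hiter_add] at hc
    rw [sub_eq_neg_add]
    exact hc
  choose anchor hanchP hanchA using hanch
  haveI : Finite ↥P := hPfin.to_subtype
  obtain ⟨x₀, hxfib⟩ := Finite.exists_infinite_fiber
    (fun i : ℕ => (⟨anchor i, hanchP i⟩ : ↥P))
  set xs : X := (x₀ : X) with hxsdef
  have hfib : {i : ℕ | anchor i = xs}.Infinite := by
    have h1 : ((fun i : ℕ => (⟨anchor i, hanchP i⟩ : ↥P)) ⁻¹' {x₀}).Infinite :=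
      Set.infinite_coe_iff.mp hxfib
    apply h1.mono
    intro i hi
    simp only [Set.mem_preimage, Set.mem_singleton_iff] at hi
    simpa [hxsdef] using congrArg Subtype.val hi
  -- the Γ-sets around xs
  set G : ℝ → Set X := fun δ => {y : X | ∀ k : ℤ, dist (hiter f k y) (hiter f k xs) ≤ δ}
    with hGdef
  have hGmono : ∀ {δ δ' : ℝ}, δ ≤ δ' → G δ ⊆ G δ' := by
    intro δ δ' h y hy k
    exact (hy k).trans h
  have hGa : ∀ δ : ℝ, 0 < δ → (a : ℕ∞) ≤ (G δ).encard := by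
    intro δ hδ
    obtain ⟨N, hN⟩ := exists_nat_gt (1 / δ)
    have hbig : ∃ i ∈ {i : ℕ | anchor i = xs}, N ≤ i := by
      by_contra hall
      push_neg at hall
      exact hfib (Set.Finite.subset (Set.finite_Iio N) (fun i hi => hall i hi))
    obtain ⟨i, hi_fib, hiN⟩ := hbig
    have hinv : 1 / ((i : ℝ) + 1) < δ := by
      rw [div_lt_iff₀ (by positivity)]
      rw [div_lt_iff₀ hδ] at hN
      have : (N : ℝ) ≤ (i : ℝ) + 1 := by
        exact_mod_cast Nat.le_succ_of_le hiN
      nlinarith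
    have hxsA : xs ∈ Aseq i := hi_fib ▸ hanchA i
    have hsub : Aseq i ⊆ G δ := by
      intro y hy k
      have := hAclose i k y hy xs hxsA
      have h2' := this.trans (min_le_right _ _)
      exact h2'.trans hinv.le
    calc (a : ℕ∞) = (Aseq i).encard := (hAcard i).symm
      _ ≤ (G δ).encard := Set.encard_mono hsub
  by_cases hbig : (m : ℕ∞) ≤ (G (e / 2)).encard
  · -- a large Γ-set: m points staying e/2-close to the orbit of xs
    obtain ⟨B, hBsub, hBcard⟩ := Set.exists_subset_encard_eq hbig
    obtain ⟨k, hk⟩ := hfe B hBcard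
    refine absurd hk (not_lt.mpr ?_)
    have hsmall : ∀ C ∈ ({hiter f k '' B} : Finset (Set X)),
        ∀ x ∈ C, ∀ y ∈ C, dist x y ≤ e := by
      intro C hC x hx y hy
      rw [Finset.mem_singleton] at hC
      subst hC
      obtain ⟨b, hb, rfl⟩ := hx
      obtain ⟨b', hb', rfl⟩ := hy
      have h1 : dist (hiter f k b) (hiter f k xs) ≤ e / 2 := hBsub hb k
      have h2' : dist (hiter f k b') (hiter f k xs) ≤ e / 2 := hBsub hb' k
      calc dist (hiter f k b) (hiter f k b')
          ≤ dist (hiter f k b) (hiter f k xs) + dist (hiter f k xs) (hiter f k b') :=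
            dist_triangle _ _ _
        _ ≤ e / 2 + e / 2 := by rw [dist_comm (hiter f k xs)]; linarith
        _ = e := by ring
    have hcov : hiter f k '' B ⊆ ⋃ C ∈ ({hiter f k '' B} : Finset (Set X)), C := by
      simp
    calc dCard e (hiter f k '' B) ≤ (({hiter f k '' B} : Finset (Set X)).card : ℕ∞) :=
          dCard_le_of_cover _ hcov hsmall
      _ = (1 : ℕ∞) := by simp
      _ ≤ (n : ℕ∞) := by exact_mod_cast h2
  · -- all Γ-sets are small: stabilization gives a point equal to xs, contradiction
    push_neg at hbig
    have hGfin : (G (e / 2)).Finite := by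
      rw [← Set.encard_lt_top_iff]
      exact hbig.trans_le le_top
    set dseq : ℕ → ℝ := fun j => min (e / 2) (1 / (j + 1)) with hdseqdef
    have hdseqpos : ∀ j : ℕ, 0 < dseq j := by
      intro j; apply lt_min (by linarith); positivity
    have hdseqle : ∀ j : ℕ, dseq j ≤ e / 2 := fun j => min_le_left _ _
    have hdseqmono : ∀ {j j' : ℕ}, j ≤ j' → dseq j' ≤ dseq j := by
      intro j j' h
      apply min_le_min le_rfl
      apply div_le_div_of_nonneg_left (by norm_num) (by positivity)
      have : (j : ℝ) ≤ (j' : ℝ) := Nat.cast_le.mpr h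
      linarith
    have hGsfin : ∀ j : ℕ, (G (dseq j)).Finite :=
      fun j => hGfin.subset (hGmono (hdseqle j))
    have hGsne : ∀ j : ℕ, (G (dseq j)).encard ≠ ⊤ :=
      fun j => (hGsfin j).encard_lt_top.ne
    -- minimizer of cardinalities
    set v : ℕ → ℕ := fun j => ((G (dseq j)).encard).toNat with hvdef
    obtain ⟨j0, hj0v⟩ := Nat.sInf_mem (⟨v 0, 0, rfl⟩ : (Set.range v).Nonempty)
    have hstat : ∀ j : ℕ, j0 ≤ j → G (dseq j) = G (dseq j0) := by
      intro j hj
      apply (hGsfin j0).eq_of_subset_of_encard_le' (hGmono (hdseqmono hj))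
      have h1 : v j0 ≤ v j := hj0v ▸ Nat.sInf_le ⟨j, rfl⟩
      rw [← ENat.coe_toNat (hGsne j0), ← ENat.coe_toNat (hGsne j)]
      exact_mod_cast h1
    have hxsG : xs ∈ G (dseq j0) := by
      intro k
      rw [dist_self]
      exact (hdseqpos j0).le
    have h2a : (1 : ℕ∞) < (G (dseq j0)).encard := by
      apply lt_of_lt_of_le _ (hGa _ (hdseqpos j0))
      exact_mod_cast by omega
    obtain ⟨y, hyG, hyne⟩ := Set.exists_ne_of_one_lt_encard h2a xs
    apply hyne
    rw [← dist_eq_zero]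
    by_contra hd0
    have hdpos' : 0 < dist y xs := by
      rcases lt_or_eq_of_le (dist_nonneg (x := y) (y := xs)) with h | h
      · exact h
      · exact absurd h.symm hd0
    obtain ⟨N, hN⟩ := exists_nat_gt (1 / dist y xs)
    set j : ℕ := max j0 N with hjdef
    have hyGj : y ∈ G (dseq j) := (hstat j (le_max_left _ _)) ▸ hyG
    have hdy : dist y xs ≤ dseq j := by
      have := hyGj 0
      rwa [hiter_zero, hiter_zero] at this
    have hlt : dseq j < dist y xs := by
      apply lt_of_le_of_lt (min_le_right _ _)
      rw [div_lt_iff₀ (by positivity)]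
      rw [div_lt_iff₀ hdpos'] at hN
      have hNj : (N : ℝ) ≤ (j : ℝ) + 1 := by
        exact_mod_cast Nat.le_succ_of_le (le_max_right j0 N)
      nlinarith
    linarith

theorem stmt7 [CompactSpace X] (f : X ≃ₜ X) (a m n : ℕ) (h1 : n < m) (h2 : 1 ≤ n)
    (h3 : 1 ≤ a) (hm : m ≤ a * n) (hf : MNExpansive f m n) :
    MNExpansive f a 1 ∧ (m ≤ 2 * n → MNExpansive f 2 1) := by
  have ha : 2 ≤ a := by
    by_contra h
    push_neg at h
    have : a = 1 := by omega
    subst this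
    rw [one_mul] at hm
    omega
  exact ⟨key_expansive f a m n h2 ha hm hf,
    fun h2n => key_expansive f 2 m n h2 le_rfl h2n hf⟩
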